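/- Let $l$ be a positive odd integer and $n$ a positive integer with $n > \sqrt{l/2}$. If $\prod_{k=1}^n (2k^2+l)$ is a perfect square and $p$ is a prime dividing $\prod_{k=1}^n (2k^2+l)$, then $p < 2n$. -/

import Mathlib

theorem stmt_0 (l n : ℕ) (hl : 0 < l) (hlodd : Odd l) (hn : (n : ℝ) > Real.sqrt ((l : ℝ) / 2))
    (hsq : IsSquare (∏ k ∈ Finset.Icc 1 n, (2 * k ^ 2 + l)))
    (p : ℕ) (hp : p.Prime) (hdvd : p ∣ ∏ k ∈ Finset.Icc 1 n, (2 * k ^ 2 + l)) :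
    p < 2 * n := by
  by_contra hcon
  push_neg at hcon
  -- basic facts from hn
  have hn0 : 0 < n := by
    by_contra h
    push_neg at h
    interval_cases n
    simp only [Nat.cast_zero] at hn
    have := Real.sqrt_nonneg ((l : ℝ) / 2)
    linarith
  have hl2 : l < 2 * n ^ 2 := by
    have h2 : (l : ℝ) / 2 < (n : ℝ) ^ 2 := by
      have := (Real.sqrt_lt' (y := (n : ℝ)) (by exact_mod_cast hn0)).mp hn
      linarith
    have : (l : ℝ) < 2 * (n : ℝ) ^ 2 := by linarith
    exact_mod_cast this
  -- each factor is odd and positive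
  have hodd : ∀ k : ℕ, Odd (2 * k ^ 2 + l) := fun k => (even_two_mul _).add_odd hlodd
  have hposf : ∀ k : ℕ, 2 * k ^ 2 + l ≠ 0 := fun k => by positivity
  -- p divides some factor
  obtain ⟨k₀, hk₀mem, hk₀dvd⟩ := (hp.prime.dvd_finset_prod_iff _).mp hdvd
  obtain ⟨hk₀1, hk₀n⟩ := Finset.mem_Icc.mp hk₀mem
  -- p is odd
  have hpodd : Odd p := hp.odd_of_ne_two (by
    rintro rfl
    exact (Nat.not_odd_iff_even.mpr (even_iff_two_dvd.mpr hk₀dvd)) (hodd k₀))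
  have hp2n : 2 * n + 1 ≤ p := by
    have := Nat.odd_iff.mp hpodd
    omega
  -- uniqueness of the factor divisible by p
  have huniq : ∀ k ∈ Finset.Icc 1 n, k ≠ k₀ → ¬ p ∣ 2 * k ^ 2 + l := by
    intro k hk hne hdk
    obtain ⟨hk1, hkn⟩ := Finset.mem_Icc.mp hk
    have hZ : (p : ℤ) ∣ 2 * ((k : ℤ) - k₀) * ((k : ℤ) + k₀) := by
      have h1 : (p : ℤ) ∣ 2 * (k : ℤ) ^ 2 + l := by exact_mod_cast Int.natCast_dvd_natCast.mpr hdk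
      have h2 : (p : ℤ) ∣ 2 * (k₀ : ℤ) ^ 2 + l := by exact_mod_cast Int.natCast_dvd_natCast.mpr hk₀dvd
      have : 2 * ((k : ℤ) - k₀) * ((k : ℤ) + k₀) = (2 * (k : ℤ) ^ 2 + l) - (2 * (k₀ : ℤ) ^ 2 + l) := by ring
      rw [this]
      exact dvd_sub h1 h2
    have hpZ : Prime (p : ℤ) := Nat.prime_iff_prime_int.mp hp
    have hnot2 : ¬ (p : ℤ) ∣ 2 := by
      intro h
      have := Int.le_of_dvd (by norm_num) h
      omega
    rcases (hpZ.dvd_mul.mp hZ) with h | h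
    · rcases hpZ.dvd_mul.mp h with h | h
      · exact hnot2 h
      · have hne' : (k : ℤ) - k₀ ≠ 0 := by
          intro h0
          apply hne
          have : (k : ℤ) = k₀ := by linarith
          exact_mod_cast this
        have := Int.le_of_dvd (abs_pos.mpr hne') ((dvd_abs _ _).mpr h)
        have habs : |(k : ℤ) - k₀| ≤ n := by
          rw [abs_le]
          constructor <;> omega
        omega
    · have := Int.le_of_dvd (by omega : (0:ℤ) < (k : ℤ) + k₀) h
      omega
  -- product is nonzero
  have hprodne : (∏ k ∈ Finset.Icc 1 n, (2 * k ^ 2 + l)) ≠ 0 :=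
    Finset.prod_ne_zero_iff.mpr (fun k _ => hposf k)
  -- factorization of product at p is even
  obtain ⟨m, hm⟩ := hsq
  have hm0 : m ≠ 0 := by rintro rfl; simp at hm; exact hprodne hm
  have heven : Even ((∏ k ∈ Finset.Icc 1 n, (2 * k ^ 2 + l)).factorization p) := by
    rw [hm, Nat.factorization_mul hm0 hm0]
    exact ⟨m.factorization p, by simp [two_mul]⟩
  -- factorization of product = factorization of the single factor
  have hfac : (∏ k ∈ Finset.Icc 1 n, (2 * k ^ 2 + l)).factorization p
      = (2 * k₀ ^ 2 + l).factorization p := by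
    rw [Nat.factorization_prod (fun k _ => hposf k)]
    rw [Finsupp.finset_sum_apply]
    rw [Finset.sum_eq_single k₀]
    · intro k hk hne
      exact Nat.factorization_eq_zero_of_not_dvd (huniq k hk hne)
    · intro h; exact absurd hk₀mem h
  have hpos : 0 < (2 * k₀ ^ 2 + l).factorization p :=
    Nat.Prime.factorization_pos_of_dvd hp (hposf k₀) hk₀dvd
  have h2le : 2 ≤ (2 * k₀ ^ 2 + l).factorization p := by
    rw [hfac] at heven
    rcases heven with ⟨c, hc⟩
    omega
  have hdvd2 : p ^ 2 ∣ 2 * k₀ ^ 2 + l := by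
    calc p ^ 2 ∣ p ^ ((2 * k₀ ^ 2 + l).factorization p) := pow_dvd_pow p h2le
    _ ∣ 2 * k₀ ^ 2 + l := Nat.ordProj_dvd _ p
  have hle := Nat.le_of_dvd (by positivity) hdvd2
  nlinarith [hp2n, hl2, hk₀n, sq_nonneg n]
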